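/- Let D ≥ 2 and j be natural numbers, and let b = 2^ℓ for a natural number ℓ ≥ 1. Let x : ℕ → ℝ satisfy x_i ≥ 0 for all i and x_i = 0 for all i > D, and suppose s_0 ≥ 1. If for every natural number r ≥ 8 one has s_{j+ℓ+r} ≤ 2^{b·2^{r−1}} · s_{j+ℓ}, then S_{2^{−j}} ≤ 1024 · b · 2^j. -/

import Mathlib

open Finset Real

private lemma two_pow_le_exp' (n : ℕ) : (2:ℝ)^n ≤ Real.exp n := by
  have h1 : (2:ℝ) ≤ Real.exp 1 := by
    have := Real.add_one_le_exp (1:ℝ); linarith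
  calc (2:ℝ)^n ≤ (Real.exp 1)^n := pow_le_pow_left₀ (by norm_num) h1 n
    _ = Real.exp n := by rw [← Real.exp_nat_mul, mul_one]

private lemma aux_pow (k : ℕ) (hk : 4 ≤ k) : 2*k+7 ≤ 2^k := by
  induction k, hk using Nat.le_induction with
  | base => norm_num
  | succ k hk ih =>
    have h2 : (2:ℕ) ≤ 2^k := by
      calc (2:ℕ) = 2^1 := rfl
        _ ≤ 2^k := Nat.pow_le_pow_right (by norm_num) (by omega)
    calc 2*(k+1)+7 = (2*k+7)+2 := by ring
      _ ≤ 2^k + 2^k := Nat.add_le_add ih h2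
      _ = 2^(k+1) := by rw [pow_succ]; ring

private lemma natkey (b r : ℕ) (hb : 2 ≤ b) (hr : 9 ≤ r) :
    2*b + (2*r+1) + b*2^(r-1) ≤ b*2^r := by
  obtain ⟨k, rfl⟩ : ∃ k, r = k + 1 := ⟨r-1, by omega⟩
  have hk : 8 ≤ k := by omega
  simp only [Nat.add_sub_cancel]
  have h1 : 2*k + 7 ≤ 2^k := aux_pow k (by omega)
  have h2 : 256 ≤ 2^k := by
    calc (256:ℕ) = 2^8 := by norm_num
      _ ≤ 2^k := Nat.pow_le_pow_right (by norm_num) hk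
  have f1 : 2*2^k ≤ b*2^k := Nat.mul_le_mul_right _ hb
  have f2 : b*256 ≤ b*2^k := Nat.mul_le_mul_left _ h2
  have key : 2*b + (2*(k+1)+1) ≤ b*2^k := by nlinarith
  have hpow : b*2^(k+1) = b*2^k + b*2^k := by rw [pow_succ]; ring
  linarith

private lemma sum_Ico_blocks (f : ℕ → ℝ) (c : ℕ → ℕ) (hc : Monotone c) (a : ℕ) :
    ∀ m : ℕ, ∑ i ∈ Finset.Ico (c a) (c (a+m)), f i
      = ∑ r ∈ Finset.Ico a (a+m), ∑ i ∈ Finset.Ico (c r) (c (r+1)), f i := by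
  intro m
  induction m with
  | zero => simp
  | succ m ih =>
    rw [show a+(m+1) = (a+m)+1 by omega]
    rw [Finset.sum_Ico_succ_top (by omega : a ≤ a+m), ← ih,
      Finset.sum_Ico_consecutive f (hc (by omega : a ≤ a+m)) (hc (by omega : a+m ≤ (a+m)+1))]

theorem stmt_0 (D j ℓ b : ℕ) (hD : 2 ≤ D) (hℓ : 1 ≤ ℓ) (hb : b = 2 ^ ℓ)
    (x : ℕ → ℝ) (hx : ∀ i, 0 ≤ x i) (hxD : ∀ i, D < i → x i = 0)
    (s : ℕ → ℝ) (hs : ∀ k, s k = ∑ i ∈ Finset.range (2 ^ (k + 1) + 1), x i)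
    (hs0 : 1 ≤ s 0)
    (hcond : ∀ r : ℕ, 8 ≤ r →
      s (j + ℓ + r) ≤ 2 ^ (b * 2 ^ (r - 1)) * s (j + ℓ)) :
    (∑ i ∈ Finset.range (D + 1), (i : ℝ) * x i * Real.exp (-(i : ℝ) * 2 ^ (-(j : ℝ)))) /
      (∑ i ∈ Finset.range (D + 1), x i * Real.exp (-(i : ℝ) * 2 ^ (-(j : ℝ))))
      ≤ 1024 * (b : ℝ) * 2 ^ j := by
  have two_pos' : (0:ℝ) < 2 := by norm_num
  set β : ℝ := (2:ℝ) ^ (-(j:ℝ)) with hβdef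
  have hβpos : (0:ℝ) < β := Real.rpow_pos_of_pos two_pos' _
  have hpowβ : ∀ a : ℕ, ((2:ℝ)^(j+a)) * β = (2:ℝ)^a := by
    intro a
    rw [hβdef, ← Real.rpow_natCast 2 (j+a), ← Real.rpow_add two_pos']
    rw [← Real.rpow_natCast 2 a]
    congr 1
    push_cast; ring
  have hb2 : 2 ≤ b := by
    rw [hb]
    calc (2:ℕ) = 2^1 := rfl
      _ ≤ 2^ℓ := Nat.pow_le_pow_right (by norm_num) hℓ
  set B : ℝ := ∑ i ∈ Finset.range (D + 1), x i * Real.exp (-(i : ℝ) * β) with hB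
  set T : ℝ := ∑ i ∈ Finset.range (D + 1), (i:ℝ) * x i * Real.exp (-(i : ℝ) * β) with hT
  have hEpos : ∀ i : ℕ, 0 < Real.exp (-(i:ℝ) * β) := fun i => Real.exp_pos _
  have hxE : ∀ i : ℕ, 0 ≤ x i * Real.exp (-(i:ℝ) * β) := fun i => mul_nonneg (hx i) (hEpos i).le
  have hixE : ∀ i : ℕ, 0 ≤ (i:ℝ) * x i * Real.exp (-(i:ℝ) * β) :=
    fun i => mul_nonneg (mul_nonneg (by positivity) (hx i)) (hEpos i).le
  have hsA1 : 1 ≤ s (j + ℓ) := by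
    refine le_trans hs0 ?_
    rw [hs, hs]
    apply Finset.sum_le_sum_of_subset_of_nonneg
    · apply Finset.range_subset_range.2
      have h := Nat.pow_le_pow_right (show 1 ≤ 2 by norm_num) (show 0+1 ≤ j+ℓ+1 by omega)
      exact Nat.add_le_add_right h 1
    · intro i _ _; exact hx i
  have hsnn : 0 ≤ s (j + ℓ) := by linarith
  -- lower bound on B
  have hBlow : Real.exp (-(2*(b:ℝ))) * s (j + ℓ) ≤ B := by
    rw [hs]
    rw [Finset.mul_sum]
    have h2 : ∑ i ∈ Finset.range (2^(j+ℓ+1)+1), Real.exp (-(2*(b:ℝ))) * x i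
        ≤ ∑ i ∈ Finset.range (2^(j+ℓ+1)+1), x i * Real.exp (-(i:ℝ) * β) := by
      apply Finset.sum_le_sum
      intro i hi
      rw [mul_comm]
      apply mul_le_mul_of_nonneg_left _ (hx i)
      apply Real.exp_le_exp.2
      have hi' : i ≤ 2^(j+ℓ+1) := Nat.lt_succ_iff.1 (Finset.mem_range.1 hi)
      have hic : (i:ℝ) ≤ (2:ℝ)^(j+(ℓ+1)) := by
        have : ((2:ℕ)^(j+ℓ+1) : ℝ) = (2:ℝ)^(j+(ℓ+1)) := by
          push_cast
          rw [add_assoc]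
        rw [← this]
        exact_mod_cast hi'
      have hmul : (i:ℝ) * β ≤ (2:ℝ)^(j+(ℓ+1)) * β :=
        mul_le_mul_of_nonneg_right hic hβpos.le
      have heq : (2:ℝ)^(j+(ℓ+1)) * β = 2*(b:ℝ) := by
        rw [hpowβ (ℓ+1), hb]
        push_cast
        rw [pow_succ]; ring
      nlinarith
    have h3 : ∑ i ∈ Finset.range (2^(j+ℓ+1)+1), x i * Real.exp (-(i:ℝ) * β) ≤ B := by
      rw [hB]
      set N := 2^(j+ℓ+1)+1 with hN
      have hsub1 : Finset.range N ⊆ Finset.range (max N (D+1)) :=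
        Finset.range_subset_range.2 (le_max_left _ _)
      have step1 : ∑ i ∈ Finset.range N, x i * Real.exp (-(i:ℝ) * β)
          ≤ ∑ i ∈ Finset.range (max N (D+1)), x i * Real.exp (-(i:ℝ) * β) :=
        Finset.sum_le_sum_of_subset_of_nonneg hsub1 (fun i _ _ => hxE i)
      have step2 : ∑ i ∈ Finset.range (max N (D+1)), x i * Real.exp (-(i:ℝ) * β)
          = ∑ i ∈ Finset.range (D+1), x i * Real.exp (-(i:ℝ) * β) := by
        apply (Finset.sum_subset (Finset.range_subset_range.2 (le_max_right _ _)) ?_).symm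
        intro i _ hni
        have hDi : D < i := by
          simp only [Finset.mem_range, not_lt] at hni
          omega
        rw [hxD i hDi]
        ring
      linarith
    linarith
  have hBpos : 0 < B := by
    have h1 : (0:ℝ) < Real.exp (-(2*(b:ℝ))) * s (j+ℓ) :=
      mul_pos (Real.exp_pos _) (by linarith)
    linarith
  -- the dyadic block endpoints
  set c : ℕ → ℕ := fun r => 2^(j+ℓ+r)+1 with hc
  have hcmono : Monotone c := by
    intro p q hpq
    simp only [hc]
    have h := Nat.pow_le_pow_right (show 1 ≤ 2 by norm_num) (show j+ℓ+p ≤ j+ℓ+q by omega)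
    exact Nat.add_le_add_right h 1
  -- numeric lemma
  have hur : ∀ r : ℕ, 9 ≤ r →
      (2:ℝ)^(j+ℓ+(r+1)) * Real.exp (-((2:ℝ)^(ℓ+r))) * (2:ℝ)^(b*2^(r-1))
        ≤ Real.exp (-(2*(b:ℝ))) * (2:ℝ)^(j+ℓ) * (1/2)^r := by
    intro r hr
    have hG : (0:ℝ) < Real.exp ((2:ℝ)^(ℓ+r)) := Real.exp_pos _
    have hH : (0:ℝ) < Real.exp (2*(b:ℝ)) := Real.exp_pos _
    have h2r : (0:ℝ) < (2:ℝ)^r := by positivity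
    have hkey : ((2:ℝ)^(j+ℓ+(r+1)) * (2:ℝ)^(b*2^(r-1))) * (Real.exp (2*(b:ℝ)) * (2:ℝ)^r)
        ≤ (2:ℝ)^(j+ℓ) * Real.exp ((2:ℝ)^(ℓ+r)) := by
      have e1 : (2:ℝ)^(ℓ+r) = ((b*2^r : ℕ):ℝ) := by
        rw [hb]; push_cast; rw [← pow_add]
      have e2 : (2:ℝ)^(j+ℓ+(r+1)) = (2:ℝ)^(j+ℓ) * (2:ℝ)^(r+1) := by
        rw [← pow_add]
      calc ((2:ℝ)^(j+ℓ+(r+1)) * (2:ℝ)^(b*2^(r-1))) * (Real.exp (2*(b:ℝ)) * (2:ℝ)^r)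
          = (2:ℝ)^(j+ℓ) * (((2:ℝ)^(r+1) * (2:ℝ)^(b*2^(r-1)) * (2:ℝ)^r) * Real.exp (2*(b:ℝ))) := by
            rw [e2]; ring
        _ = (2:ℝ)^(j+ℓ) * ((2:ℝ)^((r+1) + b*2^(r-1) + r) * Real.exp (2*(b:ℝ))) := by
            rw [pow_add, pow_add]; ring
        _ ≤ (2:ℝ)^(j+ℓ) * (Real.exp (((r+1) + b*2^(r-1) + r : ℕ):ℝ) * Real.exp (2*(b:ℝ))) := by
            have h := two_pow_le_exp' ((r+1) + b*2^(r-1) + r)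
            have hp : (0:ℝ) ≤ (2:ℝ)^(j+ℓ) := by positivity
            apply mul_le_mul_of_nonneg_left _ hp
            exact mul_le_mul_of_nonneg_right (by exact_mod_cast h) hH.le
        _ = (2:ℝ)^(j+ℓ) * Real.exp ((((r+1) + b*2^(r-1) + r : ℕ):ℝ) + 2*(b:ℝ)) := by
            rw [← Real.exp_add]
        _ ≤ (2:ℝ)^(j+ℓ) * Real.exp (((b*2^r:ℕ):ℝ)) := by
            have hp : (0:ℝ) ≤ (2:ℝ)^(j+ℓ) := by positivity
            have hn := natkey b r hb2 hr
            have hcast : ((((r+1) + b*2^(r-1) + r : ℕ)):ℝ) + 2*(b:ℝ) ≤ ((b*2^r:ℕ):ℝ) := by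
              have hn' : ((2*b + (2*r+1) + b*2^(r-1) : ℕ):ℝ) ≤ ((b*2^r : ℕ):ℝ) :=
                Nat.cast_le.2 hn
              push_cast
              push_cast at hn'
              linarith
            exact mul_le_mul_of_nonneg_left (Real.exp_le_exp.2 hcast) hp
        _ = (2:ℝ)^(j+ℓ) * Real.exp ((2:ℝ)^(ℓ+r)) := by rw [e1]
    have final : ((2:ℝ)^(j+ℓ+(r+1)) * (2:ℝ)^(b*2^(r-1))) / Real.exp ((2:ℝ)^(ℓ+r))
        ≤ (2:ℝ)^(j+ℓ) / (Real.exp (2*(b:ℝ)) * (2:ℝ)^r) :=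
      (div_le_div_iff₀ hG (mul_pos hH h2r)).2 hkey
    have eL : (2:ℝ)^(j+ℓ+(r+1)) * Real.exp (-((2:ℝ)^(ℓ+r))) * (2:ℝ)^(b*2^(r-1))
        = ((2:ℝ)^(j+ℓ+(r+1)) * (2:ℝ)^(b*2^(r-1))) / Real.exp ((2:ℝ)^(ℓ+r)) := by
      rw [Real.exp_neg]; ring
    have eR : Real.exp (-(2*(b:ℝ))) * (2:ℝ)^(j+ℓ) * (1/2:ℝ)^r
        = (2:ℝ)^(j+ℓ) / (Real.exp (2*(b:ℝ)) * (2:ℝ)^r) := by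
      rw [Real.exp_neg]
      field_simp
      rw [← mul_pow]; norm_num
    rw [eL, eR]
    exact final
  -- block bound
  have hblock : ∀ r ∈ Finset.Ico 9 (9+(D+1)),
      (∑ i ∈ Finset.Ico (c r) (c (r+1)), (i:ℝ) * x i * Real.exp (-(i:ℝ)*β))
        ≤ Real.exp (-(2*(b:ℝ))) * (2:ℝ)^(j+ℓ) * (1/2)^r * s (j+ℓ) := by
    intro r hr
    have hr9 : 9 ≤ r := (Finset.mem_Ico.1 hr).1
    have hconst : (0:ℝ) ≤ (2:ℝ)^(j+ℓ+(r+1)) * Real.exp (-((2:ℝ)^(ℓ+r))) := by positivity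
    have hA : ∑ i ∈ Finset.Ico (c r) (c (r+1)), (i:ℝ) * x i * Real.exp (-(i:ℝ)*β)
        ≤ ∑ i ∈ Finset.Ico (c r) (c (r+1)), (2:ℝ)^(j+ℓ+(r+1)) * Real.exp (-((2:ℝ)^(ℓ+r))) * x i := by
      apply Finset.sum_le_sum
      intro i hi
      obtain ⟨hi1, hi2⟩ := Finset.mem_Ico.1 hi
      simp only [hc] at hi1 hi2
      have hiu : (i:ℝ) ≤ (2:ℝ)^(j+ℓ+(r+1)) := by
        have h1 : i ≤ 2^(j+ℓ+(r+1)) := Nat.lt_succ_iff.1 hi2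
        have h2 : ((2:ℕ)^(j+ℓ+(r+1)) : ℝ) = (2:ℝ)^(j+ℓ+(r+1)) := by push_cast; ring
        rw [← h2]; exact_mod_cast h1
      have hil : (2:ℝ)^(ℓ+r) ≤ (i:ℝ) * β := by
        have h1 : (2:ℕ)^(j+ℓ+r) ≤ i := le_trans (Nat.le_add_right _ 1) hi1
        have h2 : (2:ℝ)^(j+(ℓ+r)) ≤ (i:ℝ) := by
          have hc2 : ((2:ℕ)^(j+ℓ+r) : ℝ) = (2:ℝ)^(j+(ℓ+r)) := by
            push_cast; rw [add_assoc]
          rw [← hc2]; exact_mod_cast h1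
        calc (2:ℝ)^(ℓ+r) = (2:ℝ)^(j+(ℓ+r)) * β := (hpowβ (ℓ+r)).symm
          _ ≤ (i:ℝ) * β := mul_le_mul_of_nonneg_right h2 hβpos.le
      have hexp : Real.exp (-(i:ℝ)*β) ≤ Real.exp (-((2:ℝ)^(ℓ+r))) := by
        apply Real.exp_le_exp.2
        nlinarith
      have step1 : (i:ℝ) * x i * Real.exp (-(i:ℝ)*β)
          ≤ (2:ℝ)^(j+ℓ+(r+1)) * x i * Real.exp (-(i:ℝ)*β) :=
        mul_le_mul_of_nonneg_right (mul_le_mul_of_nonneg_right hiu (hx i)) (hEpos i).le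
      have step2 : (2:ℝ)^(j+ℓ+(r+1)) * x i * Real.exp (-(i:ℝ)*β)
          ≤ (2:ℝ)^(j+ℓ+(r+1)) * x i * Real.exp (-((2:ℝ)^(ℓ+r))) := by
        apply mul_le_mul_of_nonneg_left hexp
        exact mul_nonneg (by positivity) (hx i)
      calc (i:ℝ) * x i * Real.exp (-(i:ℝ)*β)
          ≤ (2:ℝ)^(j+ℓ+(r+1)) * x i * Real.exp (-((2:ℝ)^(ℓ+r))) := le_trans step1 step2
        _ = (2:ℝ)^(j+ℓ+(r+1)) * Real.exp (-((2:ℝ)^(ℓ+r))) * x i := by ring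
    have hsum_x : ∑ i ∈ Finset.Ico (c r) (c (r+1)), x i ≤ s (j+ℓ+r) := by
      rw [hs]
      apply Finset.sum_le_sum_of_subset_of_nonneg
      · intro i hi
        obtain ⟨_, hi2⟩ := Finset.mem_Ico.1 hi
        simp only [hc] at hi2
        simp only [Finset.mem_range]
        exact hi2
      · intro i _ _; exact hx i
    calc (∑ i ∈ Finset.Ico (c r) (c (r+1)), (i:ℝ)*x i*Real.exp (-(i:ℝ)*β))
        ≤ ∑ i ∈ Finset.Ico (c r) (c (r+1)), (2:ℝ)^(j+ℓ+(r+1)) * Real.exp (-((2:ℝ)^(ℓ+r))) * x i := hA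
      _ = (2:ℝ)^(j+ℓ+(r+1)) * Real.exp (-((2:ℝ)^(ℓ+r))) * ∑ i ∈ Finset.Ico (c r) (c (r+1)), x i := by
          rw [← Finset.mul_sum]
      _ ≤ (2:ℝ)^(j+ℓ+(r+1)) * Real.exp (-((2:ℝ)^(ℓ+r))) * ((2:ℝ)^(b*2^(r-1)) * s (j+ℓ)) := by
          apply mul_le_mul_of_nonneg_left _ hconst
          exact le_trans hsum_x (hcond r (by omega))
      _ = ((2:ℝ)^(j+ℓ+(r+1)) * Real.exp (-((2:ℝ)^(ℓ+r))) * (2:ℝ)^(b*2^(r-1))) * s (j+ℓ) := by ring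
      _ ≤ (Real.exp (-(2*(b:ℝ))) * (2:ℝ)^(j+ℓ) * (1/2)^r) * s (j+ℓ) :=
          mul_le_mul_of_nonneg_right (hur r hr9) hsnn
      _ = Real.exp (-(2*(b:ℝ))) * (2:ℝ)^(j+ℓ) * (1/2)^r * s (j+ℓ) := by ring
  -- geometric sum bound
  have hgeom : ∑ r ∈ Finset.Ico 9 (9+(D+1)), (1/2:ℝ)^r ≤ 2 := by
    have h1 : ∑ r ∈ Finset.Ico 9 (9+(D+1)), (1/2:ℝ)^r
        ≤ ∑ r ∈ Finset.range (9+(D+1)), (1/2:ℝ)^r := by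
      apply Finset.sum_le_sum_of_subset_of_nonneg
      · rw [Finset.range_eq_Ico]
        exact Finset.Ico_subset_Ico (by omega) le_rfl
      · intro i _ _; positivity
    have h2 : ∑ r ∈ Finset.range (9+(D+1)), (1/2:ℝ)^r
        = ((1/2:ℝ)^(9+(D+1)) - 1) / ((1/2:ℝ) - 1) := geom_sum_eq (by norm_num) _
    have h3 : (0:ℝ) ≤ (1/2:ℝ)^(9+(D+1)) := by positivity
    have h4 : ((1/2:ℝ)^(9+(D+1)) - 1) / ((1/2:ℝ) - 1) = 2 - 2*(1/2:ℝ)^(9+(D+1)) := by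
      field_simp
      ring
    linarith
  -- tail bound
  have htail : ∑ i ∈ Finset.Ico (c 9) (c (9+(D+1))), (i:ℝ) * x i * Real.exp (-(i:ℝ)*β)
      ≤ (2:ℝ)^(j+ℓ+1) * B := by
    rw [sum_Ico_blocks (fun i => (i:ℝ) * x i * Real.exp (-(i:ℝ)*β)) c hcmono 9 (D+1)]
    calc ∑ r ∈ Finset.Ico 9 (9+(D+1)), ∑ i ∈ Finset.Ico (c r) (c (r+1)), (i:ℝ)*x i*Real.exp (-(i:ℝ)*β)
        ≤ ∑ r ∈ Finset.Ico 9 (9+(D+1)), Real.exp (-(2*(b:ℝ))) * (2:ℝ)^(j+ℓ) * (1/2)^r * s (j+ℓ) :=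
          Finset.sum_le_sum hblock
      _ = Real.exp (-(2*(b:ℝ))) * (2:ℝ)^(j+ℓ) * s (j+ℓ) * ∑ r ∈ Finset.Ico 9 (9+(D+1)), (1/2:ℝ)^r := by
          rw [Finset.mul_sum]
          apply Finset.sum_congr rfl
          intro r _
          ring
      _ ≤ Real.exp (-(2*(b:ℝ))) * (2:ℝ)^(j+ℓ) * s (j+ℓ) * 2 := by
          apply mul_le_mul_of_nonneg_left hgeom
          positivity
      _ = (2:ℝ)^(j+ℓ+1) * (Real.exp (-(2*(b:ℝ))) * s (j+ℓ)) := by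
          rw [pow_succ]; ring
      _ ≤ (2:ℝ)^(j+ℓ+1) * B := by
          apply mul_le_mul_of_nonneg_left hBlow
          positivity
  -- split T
  have hTsplit : T ≤ (2:ℝ)^(j+ℓ+9) * B
      + ∑ i ∈ Finset.Ico (c 9) (c (9+(D+1))), (i:ℝ) * x i * Real.exp (-(i:ℝ)*β) := by
    rw [hT]
    have step1 : ∀ i ∈ Finset.range (D+1), (i:ℝ) * x i * Real.exp (-(i:ℝ)*β)
        ≤ (2:ℝ)^(j+ℓ+9) * (x i * Real.exp (-(i:ℝ)*β))
          + (if 2^(j+ℓ+9) < i then (i:ℝ) * x i * Real.exp (-(i:ℝ)*β) else 0) := by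
      intro i _
      by_cases hi : 2^(j+ℓ+9) < i
      · rw [if_pos hi]
        have h0 : (0:ℝ) ≤ (2:ℝ)^(j+ℓ+9) * (x i * Real.exp (-(i:ℝ)*β)) :=
          mul_nonneg (by positivity) (hxE i)
        linarith
      · rw [if_neg hi, add_zero]
        have hle : (i:ℝ) ≤ (2:ℝ)^(j+ℓ+9) := by
          have h1 : i ≤ 2^(j+ℓ+9) := Nat.le_of_not_lt hi
          have h2 : ((2:ℕ)^(j+ℓ+9) : ℝ) = (2:ℝ)^(j+ℓ+9) := by push_cast; ring
          rw [← h2]; exact_mod_cast h1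
        have := mul_le_mul_of_nonneg_right
          (mul_le_mul_of_nonneg_right hle (hx i)) (hEpos i).le
        nlinarith
    have hsub : (Finset.range (D+1)).filter (fun i => 2^(j+ℓ+9) < i)
        ⊆ Finset.Ico (c 9) (c (9+(D+1))) := by
      intro i hi
      simp only [Finset.mem_filter, Finset.mem_range] at hi
      obtain ⟨hiD, hiM⟩ := hi
      simp only [hc, Finset.mem_Ico]
      constructor
      · exact Nat.succ_le_of_lt hiM
      · have hD2 : D < 2^(j+ℓ+(9+(D+1))) := by
          calc D < 2^D := Nat.lt_two_pow_self (n := D)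
            _ ≤ 2^(j+ℓ+(9+(D+1))) := Nat.pow_le_pow_right (by norm_num) (by omega)
        have : i ≤ D := by omega
        calc i ≤ D := this
          _ < 2^(j+ℓ+(9+(D+1))) := hD2
          _ < 2^(j+ℓ+(9+(D+1))) + 1 := Nat.lt_succ_self _
    calc ∑ i ∈ Finset.range (D+1), (i:ℝ) * x i * Real.exp (-(i:ℝ)*β)
        ≤ ∑ i ∈ Finset.range (D+1), ((2:ℝ)^(j+ℓ+9) * (x i * Real.exp (-(i:ℝ)*β))
            + (if 2^(j+ℓ+9) < i then (i:ℝ) * x i * Real.exp (-(i:ℝ)*β) else 0)) :=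
          Finset.sum_le_sum step1
      _ = (2:ℝ)^(j+ℓ+9) * B
          + ∑ i ∈ (Finset.range (D+1)).filter (fun i => 2^(j+ℓ+9) < i),
              (i:ℝ) * x i * Real.exp (-(i:ℝ)*β) := by
          rw [Finset.sum_add_distrib, ← Finset.mul_sum, ← hB, Finset.sum_filter]
      _ ≤ (2:ℝ)^(j+ℓ+9) * B
          + ∑ i ∈ Finset.Ico (c 9) (c (9+(D+1))), (i:ℝ) * x i * Real.exp (-(i:ℝ)*β) := by
          apply add_le_add (le_refl _)
          exact Finset.sum_le_sum_of_subset_of_nonneg hsub (fun i _ _ => hixE i)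
  -- conclude
  rw [div_le_iff₀ hBpos]
  have hfin : (2:ℝ)^(j+ℓ+9) + (2:ℝ)^(j+ℓ+1) ≤ 1024 * (b:ℝ) * 2^j := by
    have e : 1024 * (b:ℝ) * 2^j = (2:ℝ)^(j+ℓ+10) := by
      rw [hb]
      push_cast
      rw [pow_add, pow_add]
      norm_num
      ring
    have h1 : (2:ℝ)^(j+ℓ+1) ≤ (2:ℝ)^(j+ℓ+9) :=
      pow_le_pow_right₀ (by norm_num) (by omega)
    have h2 : (2:ℝ)^(j+ℓ+10) = 2*(2:ℝ)^(j+ℓ+9) := by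
      rw [show j+ℓ+10 = (j+ℓ+9)+1 by omega, pow_succ]
      ring
    linarith
  calc T ≤ (2:ℝ)^(j+ℓ+9) * B
        + ∑ i ∈ Finset.Ico (c 9) (c (9+(D+1))), (i:ℝ) * x i * Real.exp (-(i:ℝ)*β) := hTsplit
    _ ≤ (2:ℝ)^(j+ℓ+9) * B + (2:ℝ)^(j+ℓ+1) * B := by linarith [htail]
    _ ≤ 1024 * (b:ℝ) * 2^j * B := by
        nlinarith [mul_nonneg (sub_nonneg.2 hfin) hBpos.le]
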